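/- Reduction of Orthogonal Vectors to lock-cover race detection is correct: given two sets A1, A2 of n Boolean vectors of dimension d, construct a trace σ with one variable x and two threads t1, t2, where each vector v in Ai contributes a block in thread ti consisting of acquires of locks {ℓ_k : v[k]=1}, then a write event to x, then the matching releases, with all blocks of A1-vectors appearing before all blocks of A2-vectors in trace order. Then σ has a lock-cover race (two conflicting events holding disjoint lock-sets) if and only if there exist u ∈ A1 and v ∈ A2 that are orthogonal, i.e., for every coordinate k, u[k]=0 or v[k]=0. -/

import Mathlib

inductive Op : Type
  | read (x : ℕ)
  | write (x : ℕ)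
  | acquire (l : ℕ)
  | release (l : ℕ)
  deriving DecidableEq

structure Event where
  tid : ℕ
  op : Op
  deriving DecidableEq

/-- A concurrent trace: a finite sequence of events, each with a thread id and an operation.
Events are identified with their positions `Fin N`; trace order is the order on `Fin N`. -/
structure Trace where
  N : ℕ
  tid : Fin N → ℕ
  op : Fin N → Op

/-- Happens-before: the smallest (reflexive, transitive) order containing thread order and
ordering each release of a lock before every later (in trace order) acquire of that lock. -/
inductive HB (σ : Trace) : Fin σ.N → Fin σ.N → Prop
  | refl (i : Fin σ.N) : HB σ i i
  | thread {i j : Fin σ.N} : i < j → σ.tid i = σ.tid j → HB σ i j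
  | relAcq {i j : Fin σ.N} (l : ℕ) : i < j → σ.op i = Op.release l → σ.op j = Op.acquire l →
      HB σ i j
  | trans {i j k : Fin σ.N} : HB σ i j → HB σ j k → HB σ i k

def accessesVar (σ : Trace) (e : Fin σ.N) (x : ℕ) : Prop :=
  σ.op e = Op.read x ∨ σ.op e = Op.write x

/-- The set of locks held by the thread of `e` at `e`: locks acquired by that thread at or
before `e` and not released by that thread in between. -/
def locksHeld (σ : Trace) (e : Fin σ.N) : Set ℕ :=
  {l | ∃ i : Fin σ.N, i ≤ e ∧ σ.tid i = σ.tid e ∧ σ.op i = Op.acquire l ∧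
    ∀ j : Fin σ.N, i < j → j ≤ e → σ.tid j = σ.tid e → σ.op j ≠ Op.release l}

/-- The lock mentioned by an operation, if any. -/
def opLock : Op → Option ℕ
  | Op.acquire l => some l
  | Op.release l => some l
  | _ => none

/-- The finite set of locks appearing in a trace. -/
def locksOf (σ : Trace) : Finset ℕ :=
  Finset.univ.biUnion (fun i : Fin σ.N => (opLock (σ.op i)).toFinset)

/-- Two events conflict on variable `x`: different threads, both access `x`, at least one writes. -/
def Conflicting (σ : Trace) (x : ℕ) (e1 e2 : Fin σ.N) : Prop :=
  σ.tid e1 ≠ σ.tid e2 ∧ accessesVar σ e1 x ∧ accessesVar σ e2 x ∧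
    (σ.op e1 = Op.write x ∨ σ.op e2 = Op.write x)

/-- Consecutive conflicting pair on `x`: conflicting, `e1` before `e2` in trace order, and no
write to `x` strictly between them. -/
def ConsecConf (σ : Trace) (x : ℕ) (e1 e2 : Fin σ.N) : Prop :=
  e1 < e2 ∧ Conflicting σ x e1 e2 ∧ ∀ f : Fin σ.N, e1 < f → f < e2 → σ.op f ≠ Op.write x

/-- Build a trace from a list of events. -/
def Trace.ofList (es : List Event) : Trace :=
  ⟨es.length, fun i => (es.get i).tid, fun i => (es.get i).op⟩

/-- The block of thread `t` for a Boolean vector `v`: acquire `ℓ_k` for each `k` with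
`v k = 1`, write the single variable `0`, then release in reverse order. -/
def ovBlock {d : ℕ} (t : ℕ) (v : Fin d → Bool) : List Event :=
  (((List.finRange d).filter (fun k => v k)).map (fun k => ⟨t, Op.acquire k.val⟩)) ++
  [⟨t, Op.write 0⟩] ++
  (((List.finRange d).filter (fun k => v k)).reverse.map (fun k => ⟨t, Op.release k.val⟩))

/-- The OV-to-lock-cover trace: all blocks of `A1` in thread 1, then all blocks of `A2`
in thread 2. -/
def ovTrace {n d : ℕ} (A1 A2 : Fin n → Fin d → Bool) : Trace :=
  Trace.ofList
    ((((List.finRange n).map (fun a => ovBlock 1 (A1 a))).flatten) ++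
     (((List.finRange n).map (fun b => ovBlock 2 (A2 b))).flatten))

/-- Lock-cover race: a conflicting pair of events holding disjoint lock-sets. -/
def LockCoverRace (σ : Trace) : Prop :=
  ∃ (x : ℕ) (e1 e2 : Fin σ.N), Conflicting σ x e1 e2 ∧ locksHeld σ e1 ∩ locksHeld σ e2 = ∅

namespace OVred
open List

variable {d : ℕ}

/-- The list of true coordinates of `v`. -/
def ks (v : Fin d → Bool) : List (Fin d) := (List.finRange d).filter (fun k => v k)

def acqs (t : ℕ) (v : Fin d → Bool) : List Event :=
  (ks v).map (fun k => (⟨t, Op.acquire k.val⟩ : Event))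

def rels (t : ℕ) (v : Fin d → Bool) : List Event :=
  (ks v).reverse.map (fun k => (⟨t, Op.release k.val⟩ : Event))

lemma getElem_congr_idx {α : Type*} {l : List α} {i j : ℕ} (h : i = j) (hi : i < l.length) :
    l[i] = l[j]'(h ▸ hi) := by subst h; rfl

lemma mem_ks {v : Fin d → Bool} {k : Fin d} : k ∈ ks v ↔ v k = true := by
  simp [ks, List.mem_filter]

lemma ovBlock_eq (t : ℕ) (v : Fin d → Bool) :
    ovBlock t v = (acqs t v ++ [(⟨t, Op.write 0⟩ : Event)]) ++ rels t v := rfl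

lemma ovBlock_length (t : ℕ) (v : Fin d → Bool) :
    (ovBlock t v).length = 2 * (ks v).length + 1 := by
  simp [ovBlock_eq, acqs, rels]; omega

lemma ovBlock_getElem_lt {t : ℕ} {v : Fin d → Bool} {p : ℕ} (hp : p < (ks v).length)
    (h : p < (ovBlock t v).length) :
    (ovBlock t v)[p] = (⟨t, Op.acquire (((ks v)[p]'hp) : Fin d).val⟩ : Event) := by
  show ((acqs t v ++ [(⟨t, Op.write 0⟩ : Event)]) ++ rels t v)[p]'(by rw [← ovBlock_eq]; exact h) = _
  rw [List.getElem_append_left (by simp [acqs]; omega),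
    List.getElem_append_left (by simpa [acqs] using hp)]
  simp [acqs]

lemma ovBlock_getElem_mid {t : ℕ} {v : Fin d → Bool}
    (h : (ks v).length < (ovBlock t v).length) :
    (ovBlock t v)[(ks v).length] = (⟨t, Op.write 0⟩ : Event) := by
  show ((acqs t v ++ [(⟨t, Op.write 0⟩ : Event)]) ++ rels t v)[(ks v).length]'(by rw [← ovBlock_eq]; exact h) = _
  rw [List.getElem_append_left (by simp [acqs]),
    List.getElem_append_right (by simp [acqs])]
  simp [acqs]

lemma ovBlock_getElem_rel {t : ℕ} {v : Fin d → Bool} {j : ℕ} (hj : j < (ks v).length)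
    (h : (ks v).length + 1 + j < (ovBlock t v).length) :
    (ovBlock t v)[(ks v).length + 1 + j] =
      (⟨t, Op.release ((((ks v).reverse)[j]'(by simpa using hj)) : Fin d).val⟩ : Event) := by
  show ((acqs t v ++ [(⟨t, Op.write 0⟩ : Event)]) ++ rels t v)[(ks v).length + 1 + j]'(by rw [← ovBlock_eq]; exact h) = _
  rw [List.getElem_append_right (by simp [acqs])]
  have : (ks v).length + 1 + j - (acqs t v ++ [(⟨t, Op.write 0⟩ : Event)]).length = j := by
    simp [acqs]
  simp only [this, rels, List.getElem_map]

lemma ovBlock_getElem_gt {t : ℕ} {v : Fin d → Bool} {p : ℕ} (hp : (ks v).length < p)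
    (h : p < (ovBlock t v).length) :
    ∃ k ∈ ks v, (ovBlock t v)[p] = (⟨t, Op.release k.val⟩ : Event) := by
  have hj : p - ((ks v).length + 1) < (ks v).length := by
    rw [ovBlock_length] at h; omega
  have hpe : (ks v).length + 1 + (p - ((ks v).length + 1)) = p := by omega
  refine ⟨((ks v).reverse)[p - ((ks v).length + 1)]'(by simpa using hj), ?_, ?_⟩
  · exact List.mem_reverse.mp (List.getElem_mem _)
  · rw [getElem_congr_idx (l := ovBlock t v) hpe.symm h]
    exact ovBlock_getElem_rel hj (by omega)

lemma tid_of_mem_ovBlock {t : ℕ} {v : Fin d → Bool} {e : Event} (he : e ∈ ovBlock t v) :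
    e.tid = t := by
  rw [ovBlock_eq] at he
  rcases List.mem_append.mp he with h | h
  · rcases List.mem_append.mp h with h | h
    · obtain ⟨k, -, rfl⟩ := List.mem_map.mp h; rfl
    · rw [List.mem_singleton] at h; subst h; rfl
  · obtain ⟨k, -, rfl⟩ := List.mem_map.mp h; rfl

lemma op_of_mem_ovBlock {t : ℕ} {v : Fin d → Bool} {e : Event} (he : e ∈ ovBlock t v) :
    (∃ k : Fin d, v k = true ∧ (e.op = Op.acquire k.val ∨ e.op = Op.release k.val)) ∨
      e.op = Op.write 0 := by
  rw [ovBlock_eq] at he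
  rcases List.mem_append.mp he with h | h
  · rcases List.mem_append.mp h with h | h
    · obtain ⟨k, hk, rfl⟩ := List.mem_map.mp h
      exact Or.inl ⟨k, mem_ks.mp hk, Or.inl rfl⟩
    · rw [List.mem_singleton] at h; subst h; exact Or.inr rfl
  · obtain ⟨k, hk, rfl⟩ := List.mem_map.mp h
    exact Or.inl ⟨k, mem_ks.mp (List.mem_reverse.mp hk), Or.inr rfl⟩

/-- balanced critical section: every acquire has a later matching release by same thread. -/
def Balanced (B : List Event) : Prop :=
  ∀ p (hp : p < B.length) (lk : ℕ), (B[p]).op = Op.acquire lk →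
    ∃ q, ∃ hq : q < B.length, p < q ∧ (B[q]).op = Op.release lk ∧ (B[q]).tid = (B[p]).tid

lemma ovBlock_write_pos {t : ℕ} {v : Fin d → Bool} {p : ℕ} (hp : p < (ovBlock t v).length)
    {y : ℕ} (hw : ((ovBlock t v)[p]).op = Op.write y) : p = (ks v).length := by
  rcases lt_trichotomy p (ks v).length with h | h | h
  · rw [ovBlock_getElem_lt h] at hw; simp at hw
  · exact h
  · obtain ⟨k, -, hk⟩ := ovBlock_getElem_gt h hp
    rw [hk] at hw; simp at hw

lemma ovBlock_acquire_pos {t : ℕ} {v : Fin d → Bool} {p : ℕ} (hp : p < (ovBlock t v).length)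
    {lk : ℕ} (hw : ((ovBlock t v)[p]).op = Op.acquire lk) :
    ∃ hlt : p < (ks v).length, lk = (((ks v)[p]'hlt) : Fin d).val := by
  rcases lt_trichotomy p (ks v).length with h | h | h
  · rw [ovBlock_getElem_lt h] at hw
    exact ⟨h, by simpa using hw.symm⟩
  · subst h; rw [ovBlock_getElem_mid hp] at hw; simp at hw
  · obtain ⟨k, -, hk⟩ := ovBlock_getElem_gt h hp
    rw [hk] at hw; simp at hw

lemma ovBlock_balanced (t : ℕ) (v : Fin d → Bool) : Balanced (ovBlock t v) := by
  intro p hp lk hacq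
  obtain ⟨hlt, rfl⟩ := ovBlock_acquire_pos hp hacq
  have hkmem : ((ks v)[p]'hlt) ∈ (ks v).reverse := by
    rw [List.mem_reverse]; exact List.getElem_mem hlt
  obtain ⟨j, hj, hjk⟩ := List.mem_iff_getElem.mp hkmem
  have hjlen : j < (ks v).length := by simpa using hj
  have hq : (ks v).length + 1 + j < (ovBlock t v).length := by rw [ovBlock_length]; omega
  refine ⟨(ks v).length + 1 + j, hq, by omega, ?_, ?_⟩
  · rw [ovBlock_getElem_rel hjlen hq]
    simp [hjk]
  · rw [tid_of_mem_ovBlock (t := t) (v := v) (List.getElem_mem hp),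
      tid_of_mem_ovBlock (t := t) (v := v) (List.getElem_mem hq)]

lemma flatten_balanced : ∀ (l : List (List Event)), (∀ B ∈ l, Balanced B) →
    Balanced l.flatten := by
  intro l
  induction l with
  | nil => intro _ p hp; simp at hp
  | cons B rest ih =>
    intro h p hp lk hacq
    simp only [List.flatten_cons] at hp hacq ⊢
    by_cases hpB : p < B.length
    · rw [List.getElem_append_left hpB] at hacq
      obtain ⟨q, hq, hpq, hrel, htid⟩ := h B (by simp) p hpB lk hacq
      refine ⟨q, by rw [List.length_append]; omega, hpq, ?_, ?_⟩
      · rw [List.getElem_append_left hq]; exact hrel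
      · rw [List.getElem_append_left hq, List.getElem_append_left hpB]; exact htid
    · push_neg at hpB
      rw [List.getElem_append_right hpB] at hacq
      have hp' : p - B.length < rest.flatten.length := by rw [List.length_append] at hp; omega
      obtain ⟨q, hq, hpq, hrel, htid⟩ := ih (fun B' hB' => h B' (by simp [hB'])) _ hp' lk hacq
      refine ⟨B.length + q, by rw [List.length_append]; omega, by omega, ?_, ?_⟩
      · rw [List.getElem_append_right (by omega)]
        simpa [Nat.add_sub_cancel_left] using hrel
      · rw [List.getElem_append_right (show B.length ≤ B.length + q by omega),
          List.getElem_append_right hpB]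
        simpa [Nat.add_sub_cancel_left] using htid

lemma flatten_decomp {α : Type*} : ∀ (l : List (List α)) (i : ℕ), i < l.flatten.length →
    ∃ (l1 l2 : List (List α)) (B : List α) (p : ℕ),
      l = l1 ++ B :: l2 ∧ p < B.length ∧ i = l1.flatten.length + p := by
  intro l
  induction l with
  | nil => intro i hi; simp at hi
  | cons B rest ih =>
    intro i hi
    by_cases h : i < B.length
    · exact ⟨[], rest, B, i, rfl, h, by simp⟩
    · push_neg at h
      have hi' : i - B.length < rest.flatten.length := by
        rw [List.flatten_cons, List.length_append] at hi; omega
      obtain ⟨l1, l2, B', p, h1, h2, h3⟩ := ih (i - B.length) hi'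
      exact ⟨B :: l1, l2, B', p, by rw [h1]; rfl, h2,
        by rw [List.flatten_cons, List.length_append]; omega⟩

lemma flatten_len {lc l1 l2 : List (List Event)} {t : ℕ} {v : Fin d → Bool}
    (hl : lc = l1 ++ ovBlock t v :: l2) :
    lc.flatten.length = l1.flatten.length + (2 * (ks v).length + 1) + l2.flatten.length := by
  subst hl
  rw [List.flatten_append, List.flatten_cons]
  simp only [List.length_append, ovBlock_length]
  omega

lemma getElem_block {lc l1 l2 : List (List Event)} {B : List Event}
    (hl : lc = l1 ++ B :: l2) {r : ℕ} (hr : r < B.length)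
    (h : l1.flatten.length + r < lc.flatten.length) :
    lc.flatten[l1.flatten.length + r] = B[r] := by
  rw [List.getElem_of_eq (show lc.flatten = l1.flatten ++ (B ++ l2.flatten) by
    rw [hl, List.flatten_append, List.flatten_cons]) h]
  rw [List.getElem_append_right (by omega)]
  rw [getElem_congr_idx (show l1.flatten.length + r - l1.flatten.length = r by omega)
    (by simp only [List.length_append]; omega)]
  rw [List.getElem_append_left hr]

lemma getElem_prefix {lc l1 l2 : List (List Event)} {B : List Event}
    (hl : lc = l1 ++ B :: l2) {r : ℕ} (hr : r < l1.flatten.length)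
    (h : r < lc.flatten.length) :
    lc.flatten[r] = l1.flatten[r] := by
  rw [List.getElem_of_eq (show lc.flatten = l1.flatten ++ (B ++ l2.flatten) by
    rw [hl, List.flatten_append, List.flatten_cons]) h]
  rw [List.getElem_append_left hr]

lemma ofList_op (es : List Event) (i : Fin (Trace.ofList es).N) :
    (Trace.ofList es).op i = (es[(i : ℕ)]'i.isLt).op := rfl

lemma ofList_tid (es : List Event) (i : Fin (Trace.ofList es).N) :
    (Trace.ofList es).tid i = (es[(i : ℕ)]'i.isLt).tid := rfl

/-- Main lemma: locks held at the write event of a block. -/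
lemma locksHeld_write {lc l1 l2 : List (List Event)} {t : ℕ} {v : Fin d → Bool}
    (hl : lc = l1 ++ ovBlock t v :: l2) (hbal : ∀ B ∈ l1, Balanced B)
    (he : l1.flatten.length + (ks v).length < lc.flatten.length) :
    locksHeld (Trace.ofList lc.flatten) ⟨l1.flatten.length + (ks v).length, he⟩ =
      {x | ∃ k : Fin d, v k = true ∧ x = (k : ℕ)} := by
  have hlen := flatten_len hl
  have hBlen : (ks v).length < (ovBlock t v).length := by rw [ovBlock_length]; omega
  have hLe : lc.flatten[l1.flatten.length + (ks v).length]'he = (⟨t, Op.write 0⟩ : Event) := by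
    rw [getElem_block hl hBlen he, ovBlock_getElem_mid hBlen]
  ext x
  simp only [locksHeld, Set.mem_setOf_eq]
  constructor
  · rintro ⟨i, hie, htid, hacq, hnorel⟩
    rw [ofList_op] at hacq
    have hival : (i : ℕ) ≤ l1.flatten.length + (ks v).length := hie
    rw [ofList_tid, ofList_tid] at htid
    by_cases hi1 : (i : ℕ) < l1.flatten.length
    · -- acquire in an earlier block: find its matching release, contradiction
      exfalso
      have hbalf : Balanced l1.flatten := flatten_balanced l1 hbal
      have hacq' : (l1.flatten[(i : ℕ)]'hi1).op = Op.acquire x := by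
        rw [← getElem_prefix hl hi1 i.isLt]; exact hacq
      obtain ⟨q, hq, hiq, hrel, htidq⟩ := hbalf (i : ℕ) hi1 x hacq'
      have hqL : q < lc.flatten.length := by omega
      refine hnorel ⟨q, hqL⟩ hiq (Fin.mk_le_mk.mpr (by omega)) ?_ ?_
      · rw [ofList_tid, ofList_tid]
        show (lc.flatten[q]'hqL).tid = (lc.flatten[l1.flatten.length + (ks v).length]'he).tid
        rw [getElem_prefix hl hq hqL, htidq, ← getElem_prefix hl hi1 i.isLt]
        exact htid
      · rw [ofList_op]
        show (lc.flatten[q]'hqL).op = _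
        rw [getElem_prefix hl hq hqL]; exact hrel
    · -- acquire inside the block
      push_neg at hi1
      have hir : (i : ℕ) = l1.flatten.length + ((i : ℕ) - l1.flatten.length) := by omega
      have hrB : (i : ℕ) - l1.flatten.length < (ovBlock t v).length := by omega
      have hacq'' : ((ovBlock t v)[(i : ℕ) - l1.flatten.length]'hrB).op = Op.acquire x := by
        rw [← getElem_block hl hrB (by omega)]
        rw [getElem_congr_idx hir i.isLt] at hacq
        exact hacq
      obtain ⟨hlt, rfl⟩ := ovBlock_acquire_pos hrB hacq''
      exact ⟨_, mem_ks.mp (List.getElem_mem hlt), rfl⟩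
  · rintro ⟨k, hk, rfl⟩
    obtain ⟨p, hp, hpk⟩ := List.mem_iff_getElem.mp (mem_ks.mpr hk)
    have hiL : l1.flatten.length + p < lc.flatten.length := by omega
    refine ⟨⟨l1.flatten.length + p, hiL⟩, Fin.mk_le_mk.mpr (by omega), ?_, ?_, ?_⟩
    · rw [ofList_tid, ofList_tid]
      show (lc.flatten[l1.flatten.length + p]'hiL).tid = (lc.flatten[l1.flatten.length + (ks v).length]'he).tid
      rw [getElem_block hl (by omega) hiL, hLe, ovBlock_getElem_lt hp]
    · rw [ofList_op]
      show (lc.flatten[l1.flatten.length + p]'hiL).op = _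
      rw [getElem_block hl (by omega) hiL, ovBlock_getElem_lt hp]
      simp [hpk]
    · rintro ⟨j, hjL⟩ hij hje -
      rw [ofList_op]
      show (lc.flatten[j]'hjL).op ≠ _
      have hij' : l1.flatten.length + p < j := hij
      have hje' : j ≤ l1.flatten.length + (ks v).length := hje
      have hjr : j = l1.flatten.length + (j - l1.flatten.length) := by omega
      have hjB : j - l1.flatten.length < (ovBlock t v).length := by omega
      rw [getElem_congr_idx hjr hjL, getElem_block hl hjB (by omega)]
      rcases Nat.lt_or_ge (j - l1.flatten.length) (ks v).length with h | h
      · rw [ovBlock_getElem_lt h]; simp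
      · have hjm : j - l1.flatten.length = (ks v).length := by omega
        rw [getElem_congr_idx hjm hjB, ovBlock_getElem_mid hBlen]
        simp

lemma write_at {lc l1 l2 : List (List Event)} {t : ℕ} {v : Fin d → Bool}
    (hl : lc = l1 ++ ovBlock t v :: l2)
    (he : l1.flatten.length + (ks v).length < lc.flatten.length) :
    (Trace.ofList lc.flatten).op ⟨l1.flatten.length + (ks v).length, he⟩ = Op.write 0 ∧
    (Trace.ofList lc.flatten).tid ⟨l1.flatten.length + (ks v).length, he⟩ = t := by
  have hBlen : (ks v).length < (ovBlock t v).length := by rw [ovBlock_length]; omega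
  constructor
  · rw [ofList_op]
    show (lc.flatten[l1.flatten.length + (ks v).length]'he).op = _
    rw [getElem_block hl hBlen he, ovBlock_getElem_mid hBlen]
  · rw [ofList_tid]
    show (lc.flatten[l1.flatten.length + (ks v).length]'he).tid = _
    rw [getElem_block hl hBlen he, ovBlock_getElem_mid hBlen]

section Main
variable {n : ℕ} (A1 A2 : Fin n → Fin d → Bool)

/-- The list of blocks of the OV trace. -/
def lcOf : List (List Event) :=
  ((List.finRange n).map (fun a => ovBlock 1 (A1 a))) ++
  ((List.finRange n).map (fun b => ovBlock 2 (A2 b)))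

lemma ovTrace_eq : ovTrace A1 A2 = Trace.ofList (lcOf A1 A2).flatten := by
  rw [ovTrace, lcOf, List.flatten_append]

lemma mem_lcOf {B : List Event} (hB : B ∈ lcOf A1 A2) :
    (∃ a, B = ovBlock 1 (A1 a)) ∨ (∃ b, B = ovBlock 2 (A2 b)) := by
  rcases List.mem_append.mp hB with h | h
  · obtain ⟨a, -, rfl⟩ := List.mem_map.mp h
    exact Or.inl ⟨a, rfl⟩
  · obtain ⟨b, -, rfl⟩ := List.mem_map.mp h
    exact Or.inr ⟨b, rfl⟩

lemma lcOf_balanced : ∀ B ∈ lcOf A1 A2, Balanced B := by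
  intro B hB
  rcases mem_lcOf A1 A2 hB with ⟨a, rfl⟩ | ⟨b, rfl⟩ <;> exact ovBlock_balanced _ _

lemma finRange_split (a : Fin n) : List.finRange n =
    (List.finRange n).take a.val ++ a :: (List.finRange n).drop (a.val + 1) := by
  conv_lhs => rw [← List.take_append_drop a.val (List.finRange n)]
  congr 1
  rw [List.drop_eq_getElem_cons (by simpa using a.isLt)]
  congr 1
  rw [List.getElem_finRange]
  apply Fin.ext
  simp

lemma map_block_split {t : ℕ} (A : Fin n → Fin d → Bool) (a : Fin n) :
    (List.finRange n).map (fun a' => ovBlock t (A a')) =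
    ((List.finRange n).take a.val).map (fun a' => ovBlock t (A a')) ++
      ovBlock t (A a) ::
      ((List.finRange n).drop (a.val + 1)).map (fun a' => ovBlock t (A a')) := by
  conv_lhs => rw [finRange_split a]
  simp [List.map_append]

lemma decomp1 (a : Fin n) : ∃ l1 l2 : List (List Event),
    lcOf A1 A2 = l1 ++ ovBlock 1 (A1 a) :: l2 ∧ ∀ B ∈ l1, Balanced B := by
  refine ⟨((List.finRange n).take a.val).map (fun a' => ovBlock 1 (A1 a')),
    ((List.finRange n).drop (a.val + 1)).map (fun a' => ovBlock 1 (A1 a')) ++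
      (List.finRange n).map (fun b => ovBlock 2 (A2 b)), ?_, ?_⟩
  · rw [lcOf, map_block_split A1 a, List.append_assoc, List.cons_append]
  · rintro B hB
    obtain ⟨a', -, rfl⟩ := List.mem_map.mp hB
    exact ovBlock_balanced _ _

lemma decomp2 (b : Fin n) : ∃ l1 l2 : List (List Event),
    lcOf A1 A2 = l1 ++ ovBlock 2 (A2 b) :: l2 ∧ ∀ B ∈ l1, Balanced B := by
  refine ⟨((List.finRange n).map (fun a => ovBlock 1 (A1 a))) ++
      ((List.finRange n).take b.val).map (fun b' => ovBlock 2 (A2 b')),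
    ((List.finRange n).drop (b.val + 1)).map (fun b' => ovBlock 2 (A2 b')), ?_, ?_⟩
  · rw [lcOf, map_block_split A2 b, ← List.append_assoc]
  · rintro B hB
    rcases List.mem_append.mp hB with h | h
    · obtain ⟨a', -, rfl⟩ := List.mem_map.mp h
      exact ovBlock_balanced _ _
    · obtain ⟨b', -, rfl⟩ := List.mem_map.mp h
      exact ovBlock_balanced _ _

lemma access_is_write {x : ℕ} {e : Fin (Trace.ofList (lcOf A1 A2).flatten).N}
    (h : accessesVar (Trace.ofList (lcOf A1 A2).flatten) e x) :
    (Trace.ofList (lcOf A1 A2).flatten).op e = Op.write 0 := by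
  have hmem : (lcOf A1 A2).flatten[(e : ℕ)]'e.isLt ∈ (lcOf A1 A2).flatten :=
    List.getElem_mem _
  obtain ⟨B, hB, hEB⟩ := List.mem_flatten.mp hmem
  have hcl : (∃ k : Fin d, ((lcOf A1 A2).flatten[(e : ℕ)]'e.isLt).op = Op.acquire k.val ∨
      ((lcOf A1 A2).flatten[(e : ℕ)]'e.isLt).op = Op.release k.val) ∨
      ((lcOf A1 A2).flatten[(e : ℕ)]'e.isLt).op = Op.write 0 := by
    rcases mem_lcOf A1 A2 hB with ⟨a, rfl⟩ | ⟨b, rfl⟩ <;>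
      · rcases op_of_mem_ovBlock hEB with ⟨k, -, hk⟩ | hk
        · exact Or.inl ⟨k, hk⟩
        · exact Or.inr hk
  rw [ofList_op]
  rcases h with h | h <;> rw [ofList_op] at h <;>
    rcases hcl with ⟨k, hk | hk⟩ | hk <;> simp_all

lemma write_event_locks (e : Fin (Trace.ofList (lcOf A1 A2).flatten).N)
    (hop : (Trace.ofList (lcOf A1 A2).flatten).op e = Op.write 0) :
    ((Trace.ofList (lcOf A1 A2).flatten).tid e = 1 ∧
       ∃ a : Fin n, locksHeld (Trace.ofList (lcOf A1 A2).flatten) e =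
         {x | ∃ k : Fin d, A1 a k = true ∧ x = (k : ℕ)}) ∨
    ((Trace.ofList (lcOf A1 A2).flatten).tid e = 2 ∧
       ∃ b : Fin n, locksHeld (Trace.ofList (lcOf A1 A2).flatten) e =
         {x | ∃ k : Fin d, A2 b k = true ∧ x = (k : ℕ)}) := by
  obtain ⟨l1, l2, B, p, hl, hp, hep⟩ := flatten_decomp _ (e : ℕ) e.isLt
  have hpos : l1.flatten.length + p < (lcOf A1 A2).flatten.length := hep ▸ e.isLt
  have hget : (lcOf A1 A2).flatten[(e : ℕ)]'e.isLt = B[p] := by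
    rw [getElem_congr_idx hep e.isLt, getElem_block hl hp hpos]
  have hopB : (B[p]'hp).op = Op.write 0 := by
    rw [← hget, ← ofList_op]; exact hop
  have htidE : (Trace.ofList (lcOf A1 A2).flatten).tid e = (B[p]'hp).tid := by
    rw [ofList_tid, hget]
  have hbal : ∀ B' ∈ l1, Balanced B' := fun B' hB' =>
    lcOf_balanced A1 A2 B' (by rw [hl]; exact List.mem_append_left _ hB')
  rcases mem_lcOf A1 A2 (show B ∈ lcOf A1 A2 by
      rw [hl]; exact List.mem_append_right _ List.mem_cons_self) with ⟨a, hBa⟩ | ⟨b, hBb⟩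
  · subst hBa
    left
    have hpm : p = (ks (A1 a)).length := ovBlock_write_pos hp hopB
    subst hpm
    refine ⟨by rw [htidE]; exact tid_of_mem_ovBlock (List.getElem_mem hp), a, ?_⟩
    have hef : e = ⟨l1.flatten.length + (ks (A1 a)).length, hep ▸ e.isLt⟩ := Fin.ext hep
    rw [hef]
    exact locksHeld_write hl hbal _
  · subst hBb
    right
    have hpm : p = (ks (A2 b)).length := ovBlock_write_pos hp hopB
    subst hpm
    refine ⟨by rw [htidE]; exact tid_of_mem_ovBlock (List.getElem_mem hp), b, ?_⟩
    have hef : e = ⟨l1.flatten.length + (ks (A2 b)).length, hep ▸ e.isLt⟩ := Fin.ext hep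
    rw [hef]
    exact locksHeld_write hl hbal _

lemma disj_orth {a b : Fin n}
    (h : {x | ∃ k : Fin d, A1 a k = true ∧ x = (k : ℕ)} ∩
         {x | ∃ k : Fin d, A2 b k = true ∧ x = (k : ℕ)} = ∅) :
    ∀ k : Fin d, A1 a k = false ∨ A2 b k = false := by
  intro k
  by_contra hc
  push_neg at hc
  obtain ⟨h1, h2⟩ := hc
  rw [ne_eq, Bool.not_eq_false] at h1 h2
  have hmem : (k : ℕ) ∈ ({x | ∃ k : Fin d, A1 a k = true ∧ x = (k : ℕ)} ∩
      {x | ∃ k : Fin d, A2 b k = true ∧ x = (k : ℕ)} : Set ℕ) :=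
    ⟨⟨k, h1, rfl⟩, ⟨k, h2, rfl⟩⟩
  rw [h] at hmem
  exact hmem

end Main
end OVred

/-- The OV-to-lock-cover reduction is correct: the constructed trace has a
lock-cover race iff there are `u ∈ A1` and `v ∈ A2` that are orthogonal. -/
theorem ov_reduction_correct {n d : ℕ} (A1 A2 : Fin n → Fin d → Bool) :
    LockCoverRace (ovTrace A1 A2) ↔
    ∃ a b : Fin n, ∀ k : Fin d, A1 a k = false ∨ A2 b k = false := by
  open OVred in
  rw [ovTrace_eq A1 A2]
  constructor
  · rintro ⟨x, e1, e2, ⟨hne, hacc1, hacc2, -⟩, hdisj⟩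
    have h1 := OVred.access_is_write A1 A2 hacc1
    have h2 := OVred.access_is_write A1 A2 hacc2
    rcases OVred.write_event_locks A1 A2 e1 h1 with ⟨ht1, a, hL1⟩ | ⟨ht1, b, hL1⟩ <;>
      rcases OVred.write_event_locks A1 A2 e2 h2 with ⟨ht2, a', hL2⟩ | ⟨ht2, b', hL2⟩
    · exact absurd (ht1.trans ht2.symm) hne
    · exact ⟨a, b', OVred.disj_orth A1 A2 (by rw [← hL1, ← hL2]; exact hdisj)⟩
    · exact ⟨a', b, OVred.disj_orth A1 A2
        (by rw [← hL2, ← hL1, Set.inter_comm]; exact hdisj)⟩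
    · exact absurd (ht1.trans ht2.symm) hne
  · rintro ⟨a, b, horth⟩
    obtain ⟨l1, l2, hl, hbal⟩ := OVred.decomp1 A1 A2 a
    obtain ⟨l1', l2', hl', hbal'⟩ := OVred.decomp2 A1 A2 b
    have he1 : l1.flatten.length + (OVred.ks (A1 a)).length <
        (OVred.lcOf A1 A2).flatten.length := by
      have := OVred.flatten_len hl; omega
    have he2 : l1'.flatten.length + (OVred.ks (A2 b)).length <
        (OVred.lcOf A1 A2).flatten.length := by
      have := OVred.flatten_len hl'; omega
    obtain ⟨hop1, htid1⟩ := OVred.write_at hl he1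
    obtain ⟨hop2, htid2⟩ := OVred.write_at hl' he2
    refine ⟨0, ⟨_, he1⟩, ⟨_, he2⟩, ⟨?_, ?_, ?_, ?_⟩, ?_⟩
    · rw [htid1, htid2]; simp
    · exact Or.inr hop1
    · exact Or.inr hop2
    · exact Or.inl hop1
    · rw [OVred.locksHeld_write hl hbal he1, OVred.locksHeld_write hl' hbal' he2]
      rw [Set.eq_empty_iff_forall_notMem]
      rintro x ⟨⟨k1, hk1, rfl⟩, ⟨k2, hk2, hk⟩⟩
      have : k1 = k2 := Fin.ext hk
      subst this
      rcases horth k1 with h | h <;> simp_all
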